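/- arXiv:1709.05983 — 3 statements merged into one kernel-verified Lean document; each statement's English description precedes it below -/
import Mathlib

section
/- Every automorphism of order 3 of Q = ℤ/2^n × ℤ/2^n generates a Sylow 3-subgroup of Aut(Q); equivalently, the Sylow 3-subgroups of Aut(ℤ/2^n × ℤ/2^n) have order 3. -/
/-- The multiplicative group structure on `AddAut A` (composition), as in the older Mathlib,
where `AddAut A` was a `Group`; current Mathlib makes it an `AddGroup` instead. -/
instance AddAut.group (A : Type*) [Add A] : Group (AddAut A) where
  mul g h := AddEquiv.trans h g
  one := AddEquiv.refl _
  inv := AddEquiv.symm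
  mul_assoc _ _ _ := rfl
  one_mul _ := rfl
  mul_one _ := rfl
  inv_mul_cancel := AddEquiv.self_trans_symm

private abbrev GLι := Unit ⊕ Unit

private lemma pow_aux' {R : Type*} [CommRing R] (A C : Matrix GLι GLι R)
    (hA : A = 1 + (2:R) • C) (k : ℕ) :
    ∃ D : Matrix GLι GLι R, A ^ (2 ^ k) = 1 + ((2:R) ^ (k+1)) • D := by
  induction k with
  | zero => exact ⟨C, by simpa using hA⟩
  | succ k ih =>
    obtain ⟨D, hD⟩ := ih
    refine ⟨D + (2:R)^k • (D * D), ?_⟩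
    rw [pow_succ, pow_mul, hD]
    have h1 : ((2:R)^(k+1) • D) * ((2:R)^(k+1) • D)
        = ((2:R)^(k+1) * (2:R)^(k+1)) • (D * D) := smul_mul_smul_comm _ _ _ _
    have ht : (2:R)^(k+1) + (2:R)^(k+1) = (2:R)^(k+1+1) := by ring
    have ht2 : (2:R)^(k+1) * (2:R)^(k+1) = (2:R)^(k+1+1) * (2:R)^k := by ring
    have expand : ∀ x : Matrix GLι GLι R, (1 + x)^2 = 1 + (x + x + x * x) := by
      intro x; noncomm_ring
    rw [expand, h1, ← add_smul, ht, ht2, ← smul_smul, smul_add]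

private lemma decompose (n : ℕ) (hn : 1 ≤ n) (A : Matrix GLι GLι (ZMod (2^n)))
    (hA : A.map (ZMod.castHom (dvd_pow_self 2 (Nat.one_le_iff_ne_zero.mp hn)) (ZMod 2)) = 1) :
    ∃ C : Matrix GLι GLι (ZMod (2^n)), A = 1 + (2 : ZMod (2^n)) • C := by
  haveI : NeZero (2^n) := ⟨pow_ne_zero n two_ne_zero⟩
  set f := ZMod.castHom (dvd_pow_self 2 (Nat.one_le_iff_ne_zero.mp hn)) (ZMod 2) with hf
  have hmap : (A - 1).map f = 0 := by
    rw [Matrix.map_sub f (fun a b => map_sub f a b), Matrix.map_one f (map_zero f) (map_one f),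
      hA, sub_self]
  have hdvd : ∀ i j, 2 ∣ ((A - 1) i j).val := by
    intro i j
    have h0 : f ((A - 1) i j) = 0 := by
      have := congrFun (congrFun hmap i) j
      simpa using this
    rw [ZMod.castHom_apply, ← ZMod.natCast_val, ZMod.natCast_eq_zero_iff] at h0
    exact h0
  have key : (2 : ZMod (2^n)) • (Matrix.of fun i j => ((((A - 1) i j).val / 2 : ℕ) : ZMod (2^n)))
      = A - 1 := by
    ext i j
    show (2 : ZMod (2^n)) * ((((A - 1) i j).val / 2 : ℕ) : ZMod (2^n)) = (A - 1) i j
    rw [show (2 : ZMod (2^n)) = ((2 : ℕ) : ZMod (2^n)) by norm_cast, ← Nat.cast_mul,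
      Nat.mul_div_cancel' (hdvd i j), ZMod.natCast_zmod_val]
  exact ⟨_, by rw [key]; abel⟩

private noncomputable def myEquiv (m : ℕ) [NeZero m] :
    AddAut (ZMod m × ZMod m) ≃* (Matrix GLι GLι (ZMod m))ˣ :=
  let b : Module.Basis GLι (ZMod m) (ZMod m × ZMod m) :=
    (Module.Basis.singleton Unit (ZMod m)).prod (Module.Basis.singleton Unit (ZMod m))
  let e1 : AddAut (ZMod m × ZMod m) ≃* ((ZMod m × ZMod m) ≃ₗ[ZMod m] (ZMod m × ZMod m)) :=
    { toFun := fun f => AddEquiv.toLinearEquiv f (fun c x => ZMod.map_smul f c x)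
      invFun := fun g => g.toAddEquiv
      left_inv := fun _ => rfl
      right_inv := fun _ => rfl
      map_mul' := fun _ _ => rfl }
  e1.trans <| (LinearMap.GeneralLinearGroup.generalLinearEquiv (ZMod m) _).symm.trans <|
    Units.mapEquiv (algEquivMatrix b).toRingEquiv.toMulEquiv

private lemma cardGL2 : Nat.card (Matrix GLι GLι (ZMod 2))ˣ = 6 := by
  rw [Nat.card_eq_fintype_card]; decide

/-- Every automorphism of order 3 of ℤ/2^n × ℤ/2^n generates a Sylow 3-subgroup of the
automorphism group; equivalently, Sylow 3-subgroups of Aut(ℤ/2^n × ℤ/2^n) have order 3. -/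
theorem stmt3 (n : ℕ) (hn : 1 ≤ n)
    (θ : AddAut (ZMod (2 ^ n) × ZMod (2 ^ n))) (hθ : orderOf θ = 3) :
    (∃ S : Sylow 3 (AddAut (ZMod (2 ^ n) × ZMod (2 ^ n))),
        (S : Subgroup (AddAut (ZMod (2 ^ n) × ZMod (2 ^ n)))) = Subgroup.zpowers θ)
    ∧ ∀ S : Sylow 3 (AddAut (ZMod (2 ^ n) × ZMod (2 ^ n))), Nat.card S = 3 := by
  haveI : NeZero (2^n) := ⟨pow_ne_zero n two_ne_zero⟩
  haveI : Fact (Nat.Prime 3) := ⟨by norm_num⟩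
  let e : AddAut (ZMod (2 ^ n) × ZMod (2 ^ n)) ≃* (Matrix GLι GLι (ZMod (2^n)))ˣ := myEquiv (2^n)
  haveI : Finite (AddAut (ZMod (2 ^ n) × ZMod (2 ^ n))) := Finite.of_equiv _ e.symm.toEquiv
  let red : Matrix GLι GLι (ZMod (2^n)) →+* Matrix GLι GLι (ZMod 2) :=
    (ZMod.castHom (dvd_pow_self 2 (Nat.one_le_iff_ne_zero.mp hn)) (ZMod 2)).mapMatrix
  let φ : AddAut (ZMod (2 ^ n) × ZMod (2 ^ n)) →* (Matrix GLι GLι (ZMod 2))ˣ :=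
    (Units.map red.toMonoidHom).comp e.toMonoidHom
  have hker : ∀ x : AddAut (ZMod (2 ^ n) × ZMod (2 ^ n)), φ x = 1 → x ^ (2^(n-1)) = 1 := by
    intro x hx
    have hA : ((e x : (Matrix GLι GLι (ZMod (2^n)))ˣ) : Matrix GLι GLι (ZMod (2^n))).map
        (ZMod.castHom (dvd_pow_self 2 (Nat.one_le_iff_ne_zero.mp hn)) (ZMod 2)) = 1 := by
      have h := congrArg Units.val hx
      simpa [φ, red, RingHom.mapMatrix_apply] using h
    obtain ⟨C, hC⟩ := decompose n hn _ hA
    obtain ⟨D, hD⟩ := pow_aux' _ C hC (n-1)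
    have h2n : ((2 : ZMod (2^n)))^((n-1)+1) = 0 := by
      rw [Nat.sub_add_cancel hn,
        show ((2 : ZMod (2^n)))^n = ((2^n : ℕ) : ZMod (2^n)) by push_cast; ring,
        ZMod.natCast_self]
    have hu : (e x)^(2^(n-1)) = 1 := by
      apply Units.ext
      rw [Units.val_pow_eq_pow_val, hD, h2n, zero_smul, add_zero, Units.val_one]
    apply e.injective
    rw [map_pow, hu, map_one]
  have hcard3 : 3 ∣ Nat.card (AddAut (ZMod (2 ^ n) × ZMod (2 ^ n))) :=
    hθ ▸ orderOf_dvd_natCard θ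
  have hS3 : ∀ S : Sylow 3 (AddAut (ZMod (2 ^ n) × ZMod (2 ^ n))), Nat.card S = 3 := by
    intro S
    rw [Sylow.card_eq_multiplicity S]
    have hv1 : 1 ≤ (Nat.card (AddAut (ZMod (2 ^ n) × ZMod (2 ^ n)))).factorization 3 :=
      (Nat.Prime.factorization_pos_of_dvd (by norm_num) Nat.card_pos.ne' hcard3)
    have hinj : Function.Injective (φ.comp S.1.subtype) := by
      rw [← MonoidHom.ker_eq_bot_iff, eq_bot_iff]
      intro x hx
      have hx1 : φ ((x : AddAut (ZMod (2 ^ n) × ZMod (2 ^ n)))) = 1 := hx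
      have h3 : orderOf ((x : AddAut (ZMod (2 ^ n) × ZMod (2 ^ n)))) ∣ 2^(n-1) := orderOf_dvd_of_pow_eq_one (hker _ hx1)
      obtain ⟨k, hk⟩ := S.isPGroup' x
      have h4 : orderOf ((x : AddAut (ZMod (2 ^ n) × ZMod (2 ^ n)))) ∣ 3^k := by
        apply orderOf_dvd_of_pow_eq_one
        exact_mod_cast congrArg (Subtype.val) hk
      have hco : Nat.Coprime (2^(n-1)) (3^k) :=
        Nat.Coprime.pow (n-1) k (by norm_num)
      have : orderOf ((x : AddAut (ZMod (2 ^ n) × ZMod (2 ^ n)))) = 1 := Nat.eq_one_of_dvd_one (hco ▸ Nat.dvd_gcd h3 h4)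
      have hx1' : ((x : AddAut (ZMod (2 ^ n) × ZMod (2 ^ n)))) = 1 := orderOf_eq_one_iff.mp this
      simpa [Subgroup.mem_bot] using Subtype.ext hx1'
    have hdvd6 : Nat.card S ∣ 6 := by
      rw [← cardGL2]
      exact Subgroup.card_dvd_of_injective (φ.comp S.1.subtype) hinj
    rw [Sylow.card_eq_multiplicity S] at hdvd6
    have hv2 : (Nat.card (AddAut (ZMod (2 ^ n) × ZMod (2 ^ n)))).factorization 3 ≤ 1 := by
      by_contra h
      push_neg at h
      have h9 : (9 : ℕ) ∣ 3 ^ (Nat.card (AddAut (ZMod (2 ^ n) × ZMod (2 ^ n)))).factorization 3 :=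
        (show (9:ℕ) = 3^2 by norm_num) ▸ pow_dvd_pow 3 h
      exact absurd (dvd_trans h9 hdvd6) (by norm_num)
    have hv : (Nat.card (AddAut (ZMod (2 ^ n) × ZMod (2 ^ n)))).factorization 3 = 1 :=
      le_antisymm hv2 hv1
    rw [hv, pow_one]
  refine ⟨?_, hS3⟩
  have hP : IsPGroup 3 (Subgroup.zpowers θ) := by
    apply IsPGroup.of_card (n := 1)
    rw [Nat.card_zpowers, hθ, pow_one]
  obtain ⟨S, hle⟩ := hP.exists_le_sylow
  refine ⟨S, ?_⟩
  have h1 : Nat.card (Subgroup.zpowers θ) = 3 := by rw [Nat.card_zpowers, hθ]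
  exact (Subgroup.eq_of_le_of_card_ge hle (by rw [hS3 S, h1])).symm
end

section
/- An automorphism of Q = ℤ/2^n × ℤ/2^n of order 3 acts freely on the set of nontrivial elements of Q; that is, if θ ∈ Aut(Q) has order 3 and θ(x) = x for some x ∈ Q, then x = 1. -/
lemma aux_neZero (n : ℕ) : NeZero ((2:ℕ)^n) := ⟨pow_ne_zero n two_ne_zero⟩

lemma aux_repr (n : ℕ) (a : ZMod (2^n)) :
    ∃ v : ℕ, (v : ZMod (2^n)) = a ∧ v < 2^n := by
  haveI := aux_neZero n
  exact ⟨a.val, by rw [ZMod.natCast_val, ZMod.cast_id], a.val_lt⟩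

lemma aux_div2 (n : ℕ) (hn : 1 ≤ n) (a : ZMod (2^n))
    (h : ((2^(n-1) : ℕ) : ZMod (2^n)) * a = 0) : ∃ b : ZMod (2^n), a = 2 * b := by
  haveI := aux_neZero n
  have hsplit : (2:ℕ)^n = 2^(n-1) * 2 := by rw [← pow_succ]; congr 1; omega
  obtain ⟨v, hva, hvlt⟩ := aux_repr n a
  have h1 : ((2^(n-1) * v : ℕ) : ZMod (2^n)) = 0 := by push_cast at h ⊢; rw [hva]; exact h
  obtain ⟨m, hm⟩ := (ZMod.natCast_eq_zero_iff _ _).mp h1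
  rw [hsplit] at hm
  have hv2 : v = 2 * m := by
    have hp : 0 < (2:ℕ)^(n-1) := by positivity
    nlinarith [hm]
  refine ⟨(m : ZMod (2^n)), ?_⟩
  rw [← hva, hv2]; push_cast; ring

lemma aux_tor (n : ℕ) (hn : 1 ≤ n) (a : ZMod (2^n)) (h : a + a = 0) :
    a = 0 ∨ a = ((2^(n-1) : ℕ) : ZMod (2^n)) := by
  haveI := aux_neZero n
  have hsplit : (2:ℕ)^n = 2^(n-1) * 2 := by rw [← pow_succ]; congr 1; omega
  obtain ⟨v, hva, hvlt⟩ := aux_repr n a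
  have h1 : ((v + v : ℕ) : ZMod (2^n)) = 0 := by push_cast; rw [hva]; exact h
  obtain ⟨m, hm⟩ := (ZMod.natCast_eq_zero_iff _ _).mp h1
  have hmlt : m < 2 := by
    by_contra hc
    push_neg at hc
    have : (2:ℕ)^n * 2 ≤ 2^n * m := Nat.mul_le_mul_left _ hc
    omega
  interval_cases m
  · left
    have hv0 : v = 0 := by omega
    rw [← hva, hv0]; simp
  · right
    have hv1 : v = 2^(n-1) := by omega
    rw [← hva, hv1]

lemma aux_cne (n : ℕ) (hn : 1 ≤ n) : ((2^(n-1) : ℕ) : ZMod (2^n)) ≠ 0 := by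
  haveI := aux_neZero n
  rw [Ne, ZMod.natCast_eq_zero_iff]
  intro hd
  have h1 := Nat.le_of_dvd (by positivity) hd
  have h2 : (2:ℕ)^(n-1) < 2^n := Nat.pow_lt_pow_right one_lt_two (by omega)
  omega

set_option maxHeartbeats 1000000 in
lemma aux_mem {G : Type} [AddCommGroup G] (c : G) (hc : ¬ c = 0) (hcc : c + c = 0)
    (u t s : G × G)
    (hu1 : u.1 = 0 ∨ u.1 = c) (hu2 : u.2 = 0 ∨ u.2 = c)
    (ht1 : t.1 = 0 ∨ t.1 = c) (ht2 : t.2 = 0 ∨ t.2 = c)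
    (hs1 : s.1 = 0 ∨ s.1 = c) (hs2 : s.2 = 0 ∨ s.2 = c)
    (ht0 : t ≠ 0) (hs0 : s ≠ 0) (hst : s ≠ t) :
    u = 0 ∨ u = t ∨ u = s ∨ u = t + s := by
  obtain ⟨u1, u2⟩ := u; obtain ⟨t1, t2⟩ := t; obtain ⟨s1, s2⟩ := s
  simp only [Prod.mk.injEq, Prod.mk_add_mk, Ne, Prod.ext_iff, Prod.fst_zero, Prod.snd_zero,
    not_and_or] at *
  rcases hu1 with rfl|rfl <;> rcases hu2 with rfl|rfl <;> rcases ht1 with rfl|rfl <;>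
    rcases ht2 with rfl|rfl <;> rcases hs1 with rfl|rfl <;> rcases hs2 with rfl|rfl <;>
    simp_all

section Main

variable {n : ℕ}

/-- nsmul on the product, componentwise as ring multiplication. -/
lemma aux_smul (n k : ℕ) (y : ZMod (2^n) × ZMod (2^n)) :
    k • y = (((k:ℕ) : ZMod (2^n)) * y.1, ((k:ℕ) : ZMod (2^n)) * y.2) := by
  ext <;> simp [nsmul_eq_mul]

lemma aux_exp (n : ℕ) (y : ZMod (2^n) × ZMod (2^n)) : (2^n : ℕ) • y = 0 := by
  haveI := aux_neZero n
  rw [aux_smul, ZMod.natCast_self (2^n)]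
  simp [Prod.ext_iff]

/-- cancellation of 3 -/
lemma aux_cancel3 (n k : ℕ) (v w : ZMod (2^n) × ZMod (2^n))
    (h : (3:ℕ) • v = (2^k : ℕ) • w) : ∃ z, v = (2^k : ℕ) • z := by
  haveI := aux_neZero n
  have hu : IsUnit (3 : ZMod (2^n)) := by
    have h3 : ((3:ℕ) : ZMod (2^n)) = 3 := by norm_num
    rw [← h3, ZMod.isUnit_iff_coprime]
    exact Nat.Coprime.pow_right n (by norm_num)
  obtain ⟨u, hu3⟩ := hu
  set b : ZMod (2^n) := ↑u⁻¹ with hb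
  have hb3 : b * 3 = 1 := by rw [hb, ← hu3]; exact u.inv_mul
  rw [aux_smul, aux_smul, Prod.ext_iff] at h
  obtain ⟨h1, h2⟩ := h
  push_cast at h1 h2
  refine ⟨(b * w.1, b * w.2), ?_⟩
  rw [aux_smul, Prod.ext_iff]
  constructor
  · calc v.1 = (b*3) * v.1 := by rw [hb3, one_mul]
      _ = b * ((3:ZMod (2^n)) * v.1) := by ring
      _ = b * (((2^k:ℕ) : ZMod (2^n)) * w.1) := by push_cast; rw [h1]
      _ = ((2^k:ℕ) : ZMod (2^n)) * (b * w.1) := by ring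
  · calc v.2 = (b*3) * v.2 := by rw [hb3, one_mul]
      _ = b * ((3:ZMod (2^n)) * v.2) := by ring
      _ = b * (((2^k:ℕ) : ZMod (2^n)) * w.2) := by push_cast; rw [h2]
      _ = ((2^k:ℕ) : ZMod (2^n)) * (b * w.2) := by ring

end Main

/-- An automorphism of order 3 of ℤ/2^n × ℤ/2^n acts freely on the nontrivial elements. -/
theorem stmt4 (n : ℕ) (hn : 1 ≤ n)
    (θ : AddAut (ZMod (2 ^ n) × ZMod (2 ^ n))) (hθ : addOrderOf θ = 3)
    (x : ZMod (2 ^ n) × ZMod (2 ^ n)) (hfix : θ x = x) : x = 0 := by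
  haveI := aux_neZero n
  by_contra hx
  -- θ³ = id pointwise
  have hθ3 : ∀ y : ZMod (2^n) × ZMod (2^n), θ (θ (θ y)) = y := by
    intro y
    have h3 : θ + θ + θ = 0 := by
      have h3' := addOrderOf_nsmul_eq_zero θ
      rw [hθ, show (3:ℕ) = 0+1+1+1 from rfl, succ_nsmul, succ_nsmul, succ_nsmul, zero_nsmul,
        zero_add] at h3'
      exact h3'
    have := congrArg (fun f : AddAut (ZMod (2^n) × ZMod (2^n)) => f y) h3
    simpa [AddAut.add_apply, AddAut.zero_apply] using this
  -- find a nonzero fixed 2-torsion element t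
  obtain ⟨t, ht0, ht2, htf⟩ : ∃ t : ZMod (2^n) × ZMod (2^n),
      t ≠ 0 ∧ t + t = 0 ∧ θ t = t := by
    have hex : ∃ k, (2^k : ℕ) • x = 0 := ⟨n, aux_exp n x⟩
    set m := Nat.find hex with hm
    have hm0 : (2^m : ℕ) • x = 0 := Nat.find_spec hex
    have hm1 : 1 ≤ m := by
      rcases Nat.eq_zero_or_pos m with h | h
      · exfalso; apply hx; simpa [h] using hm0
      · exact h
    refine ⟨(2^(m-1) : ℕ) • x, ?_, ?_, ?_⟩
    · exact Nat.find_min hex (by omega)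
    · rw [← add_nsmul]
      have : (2:ℕ)^(m-1) + 2^(m-1) = 2^m := by
        rw [← two_mul, ← pow_succ']; congr 1; omega
      rw [this]; exact hm0
    · rw [map_nsmul, hfix]
  -- the step lemma
  have hstep : ∀ s : ZMod (2^n) × ZMod (2^n), θ s = t + s → False := by
    intro s h1
    have h2 : θ (t + s) = s := by
      rw [map_add, htf, h1, ← add_assoc, ht2, zero_add]
    have h4 : θ (θ (θ s)) = t + s := by rw [h1, h2, h1]
    rw [hθ3 s] at h4
    exact ht0 (by rwa [right_eq_add] at h4)
  -- θ fixes all 2-torsion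
  have hfixT : ∀ s : ZMod (2^n) × ZMod (2^n), s + s = 0 → θ s = s := by
    intro s hs
    by_cases hs0 : s = 0
    · rw [hs0, map_zero]
    by_cases hst : s = t
    · rw [hst, htf]
    -- classification of 2-torsion elements
    have hmem : ∀ u : ZMod (2^n) × ZMod (2^n), u + u = 0 →
        u = 0 ∨ u = t ∨ u = s ∨ u = t + s := by
      intro u hu
      have hcc : ((2^(n-1) : ℕ) : ZMod (2^n)) + ((2^(n-1) : ℕ) : ZMod (2^n)) = 0 := by
        rw [← Nat.cast_add]
        have : (2:ℕ)^(n-1) + 2^(n-1) = 2^n := by rw [← two_mul, ← pow_succ']; congr 1; omega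
        rw [this, ZMod.natCast_self]
      exact aux_mem _ (aux_cne n hn) hcc u t s
        (aux_tor n hn u.1 (by rw [← Prod.fst_add, hu]; rfl))
        (aux_tor n hn u.2 (by rw [← Prod.snd_add, hu]; rfl))
        (aux_tor n hn t.1 (by rw [← Prod.fst_add, ht2]; rfl))
        (aux_tor n hn t.2 (by rw [← Prod.snd_add, ht2]; rfl))
        (aux_tor n hn s.1 (by rw [← Prod.fst_add, hs]; rfl))
        (aux_tor n hn s.2 (by rw [← Prod.snd_add, hs]; rfl))
        ht0 hs0 hst
    have hθs2 : θ s + θ s = 0 := by rw [← map_add, hs, map_zero]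
    rcases hmem (θ s) hθs2 with h | h | h | h
    · exact absurd (θ.injective (by rw [h, map_zero])) hs0
    · exact absurd (θ.injective (by rw [h, htf])) hst
    · exact h
    · exact absurd (hstep s h) id
  -- every θ y - y is divisible by 2
  have h2Q : ∀ y : ZMod (2^n) × ZMod (2^n), ∃ z, θ y - y = (2:ℕ) • z := by
    intro y
    have hyt : (2^(n-1) : ℕ) • y + (2^(n-1) : ℕ) • y = 0 := by
      rw [← add_nsmul]
      have : (2:ℕ)^(n-1) + 2^(n-1) = 2^n := by rw [← two_mul, ← pow_succ']; congr 1; omega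
      rw [this]; exact aux_exp n y
    have hfy := hfixT _ hyt
    have hA : (2^(n-1) : ℕ) • (θ y - y) = 0 := by
      rw [smul_sub, ← map_nsmul, hfy, sub_self]
    rw [aux_smul, Prod.ext_iff] at hA
    obtain ⟨hA1, hA2⟩ := hA
    obtain ⟨b1, hb1⟩ := aux_div2 n hn _ hA1
    obtain ⟨b2, hb2⟩ := aux_div2 n hn _ hA2
    refine ⟨(b1, b2), ?_⟩
    rw [aux_smul, Prod.ext_iff]
    constructor
    · rw [hb1]; push_cast; rfl
    · rw [hb2]; push_cast; rfl
  -- the key identity from θ³ = 1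
  have hkey : ∀ y : ZMod (2^n) × ZMod (2^n),
      (3:ℕ) • (θ y - y) = -((3:ℕ) • (θ (θ y - y) - (θ y - y)) +
        (θ (θ (θ y - y) - (θ y - y)) - (θ (θ y - y) - (θ y - y)))) := by
    intro y
    simp only [map_sub]
    rw [hθ3 y]
    abel
  -- induction: θ y - y divisible by 2^k for all k
  have hdiv : ∀ k, ∀ y : ZMod (2^n) × ZMod (2^n), ∃ z, θ y - y = (2^k : ℕ) • z := by
    intro k
    induction k with
    | zero => intro y; exact ⟨θ y - y, by simp⟩
    | succ k ih =>
      intro y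
      obtain ⟨z, hz⟩ := ih y
      obtain ⟨w, hw⟩ := h2Q z
      -- ψ² y = 2^(k+1) • w
      have hψ2 : θ (θ y - y) - (θ y - y) = (2^(k+1) : ℕ) • w := by
        rw [hz, map_nsmul, ← smul_sub, hw, smul_smul, ← pow_succ]
      obtain ⟨w2, hw2⟩ := h2Q w
      have hψ3 : θ (θ (θ y - y) - (θ y - y)) - (θ (θ y - y) - (θ y - y)) =
          (2^(k+1) : ℕ) • ((2:ℕ) • w2) := by
        rw [hψ2, map_nsmul, ← smul_sub, hw2]
      have h3v : (3:ℕ) • (θ y - y) = (2^(k+1) : ℕ) • (-((3:ℕ) • w + (2:ℕ) • w2)) := by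
        rw [hkey y, hψ3, hψ2, smul_comm, ← smul_add, ← smul_neg]
      exact aux_cancel3 n (k+1) _ _ h3v
  -- conclude θ = 1
  have hid : ∀ y : ZMod (2^n) × ZMod (2^n), θ y = y := by
    intro y
    obtain ⟨z, hz⟩ := hdiv n y
    rw [aux_exp] at hz
    exact sub_eq_zero.mp hz
  have : θ = 0 := DFunLike.ext θ 0 fun y => by rw [hid y]; rfl
  rw [this, addOrderOf_zero] at hθ
  norm_num at hθ
end

section
/- Let a group E of odd order act on a finite 2-group P stabilizing a normal subgroup Q of P, such that [P, E] ≤ Q. Then E acts trivially on the quotient P/Q, and every coset of Q in P contains an element fixed by E; consequently P = Q · C_P(E). -/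
open Subgroup QuotientGroup

section Aux

variable {P E : Type} [Group P] [Finite P] [Group E] [Finite E] [MulDistribMulAction E P]

/-- The induced `MulDistribMulAction` on the quotient by an invariant normal subgroup. -/
def glaubQuotAction (Z : Subgroup P) [Z.Normal]
    (hZinv : ∀ (e : E), ∀ z ∈ Z, e • z ∈ Z) :
    MulDistribMulAction E (P ⧸ Z) where
  smul e := QuotientGroup.map Z Z (MulDistribMulAction.toMonoidHom P e)
    (fun z hz => by
      simp only [Subgroup.mem_comap, MulDistribMulAction.toMonoidHom_apply]
      exact hZinv e z hz)
  one_smul q := QuotientGroup.induction_on q fun x => by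
    show QuotientGroup.map Z Z _ _ _ = _
    rw [QuotientGroup.map_mk, MulDistribMulAction.toMonoidHom_apply, one_smul]
  mul_smul e f q := QuotientGroup.induction_on q fun x => by
    show QuotientGroup.map Z Z _ _ _ =
      QuotientGroup.map Z Z _ _ (QuotientGroup.map Z Z _ _ _)
    simp only [QuotientGroup.map_mk, MulDistribMulAction.toMonoidHom_apply, mul_smul]
  smul_mul e q r := map_mul (QuotientGroup.map Z Z (MulDistribMulAction.toMonoidHom P e) _) q r
  smul_one e := map_one (QuotientGroup.map Z Z (MulDistribMulAction.toMonoidHom P e) _)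

open scoped IsMulCommutative in
/-- Fixed point in a coset of an abelian invariant subgroup. -/
theorem glaub_abelian_coset (hP : IsPGroup 2 P) (hE : Odd (Nat.card E))
    (Z : Subgroup P) (hcomm : ∀ a ∈ Z, ∀ b ∈ Z, a * b = b * a)
    (hZinv : ∀ (e : E), ∀ z ∈ Z, e • z ∈ Z)
    (y : P) (hy : ∀ e : E, y⁻¹ * (e • y) ∈ Z) :
    ∃ y' : P, (∀ e : E, e • y' = y') ∧ y'⁻¹ * y ∈ Z := by
  haveI := Fintype.ofFinite E
  haveI hZc : IsMulCommutative Z := ⟨⟨fun a b => Subtype.ext (hcomm a a.2 b b.2)⟩⟩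
  set n := Nat.card E with hn
  by_cases hZ1 : Nat.card Z ≤ 1
  · have hbot : Z = ⊥ := Subgroup.eq_bot_of_card_le Z hZ1
    refine ⟨y, fun e => ?_, by simpa using Z.one_mem⟩
    have := hy e
    rw [hbot, Subgroup.mem_bot, inv_mul_eq_one] at this
    exact this.symm
  · push_neg at hZ1
    -- coprimality
    have hcop : Nat.Coprime n (Nat.card Z) := by
      obtain ⟨m, hm⟩ := IsPGroup.iff_card.mp hP
      have hdvd : Nat.card Z ∣ Nat.card P := Subgroup.card_subgroup_dvd_card Z
      have h2 : Nat.Coprime n 2 := hE.coprime_two_right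
      exact Nat.Coprime.coprime_dvd_right hdvd (by rw [hm]; exact h2.pow_right m)
    obtain ⟨k, -, hk⟩ := Nat.exists_mul_mod_eq_one_of_coprime hcop hZ1
    have hpow : ∀ z : Z, z ^ (n * k) = z := by
      intro z
      have hd := Nat.div_add_mod (n * k) (Nat.card Z)
      rw [hk] at hd
      calc z ^ (n * k) = z ^ (Nat.card Z * (n * k / Nat.card Z) + 1) := by rw [hd]
        _ = (z ^ Nat.card Z) ^ (n * k / Nat.card Z) * z := by rw [pow_add, pow_mul, pow_one]
        _ = z := by rw [pow_card_eq_one', one_pow, one_mul]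
    set F : E → Z := fun e => ⟨y⁻¹ * (e • y), hy e⟩ with hF
    set A : E → Z →* Z := fun e =>
      { toFun := fun z => ⟨e • (z : P), hZinv e z z.2⟩
        map_one' := Subtype.ext (smul_one e)
        map_mul' := fun a b => Subtype.ext (smul_mul' e (a : P) (b : P)) } with hA
    have cocycle : ∀ σ e : E, F (σ * e) = F σ * A σ (F e) := by
      intro σ e
      apply Subtype.ext
      show y⁻¹ * ((σ * e) • y) = (y⁻¹ * (σ • y)) * (σ • (y⁻¹ * (e • y)))
      rw [smul_mul', smul_inv', mul_smul]
      group
    set c : Z := ∏ e : E, F e with hc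
    have hAc : ∀ σ : E, A σ c = (F σ)⁻¹ ^ n * c := by
      intro σ
      rw [hc, map_prod]
      have h1 : ∀ e : E, A σ (F e) = (F σ)⁻¹ * F (σ * e) := by
        intro e
        rw [cocycle σ e, inv_mul_cancel_left]
      calc (∏ e : E, A σ (F e)) = ∏ e : E, ((F σ)⁻¹ * F (σ * e)) :=
            Finset.prod_congr rfl fun e _ => h1 e
        _ = (∏ _e : E, (F σ)⁻¹) * ∏ e : E, F (σ * e) := Finset.prod_mul_distrib
        _ = (F σ)⁻¹ ^ n * c := by
            rw [Finset.prod_const, Finset.card_univ, hn, Nat.card_eq_fintype_card, hc]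
            congr 1
            exact Equiv.prod_comp (Equiv.mulLeft σ) F
    refine ⟨y * ((c ^ k : Z) : P), fun σ => ?_, ?_⟩
    · have hAck : A σ (c ^ k) = (F σ)⁻¹ * c ^ k := by
        rw [map_pow, hAc, mul_pow, ← pow_mul, hpow]
      have hcoe : σ • ((c ^ k : Z) : P) = ((A σ (c ^ k) : Z) : P) := rfl
      rw [smul_mul', hcoe, hAck]
      push_cast
      rw [show ((F σ : Z) : P) = y⁻¹ * (σ • y) from rfl]
      group
    · have h : (y * ((c ^ k : Z) : P))⁻¹ * y = (((c ^ k)⁻¹ : Z) : P) := by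
        push_cast; group
      rw [h]
      exact ((c ^ k)⁻¹ : Z).2

end Aux

theorem glaub_key : ∀ (n : ℕ) (P : Type) [Group P] [Finite P], IsPGroup 2 P →
    Nat.card P ≤ n → ∀ (E : Type) [Group E] [Finite E], Odd (Nat.card E) →
    ∀ [MulDistribMulAction E P] (Q : Subgroup P) [Q.Normal],
    (∀ (e : E), ∀ q ∈ Q, e • q ∈ Q) → ∀ x : P, (∀ e : E, x⁻¹ * (e • x) ∈ Q) →
    ∃ y : P, (∀ e : E, e • y = y) ∧ y⁻¹ * x ∈ Q := by
  intro n
  induction n using Nat.strong_induction_on with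
  | _ n ih =>
    intro P _ _ hP hcard E _ _ hE _ Q hQn hQinv x hx
    by_cases hQb : Q = ⊥
    · subst hQb
      refine ⟨x, fun e => ?_, by simpa using Subgroup.one_mem ⊥⟩
      have := hx e
      rw [Subgroup.mem_bot, inv_mul_eq_one] at this
      exact this.symm
    · -- Z = C_P(Q) ⊓ Q is a nontrivial abelian E-invariant normal subgroup of P
      set Z : Subgroup P := Subgroup.centralizer (Q : Set P) ⊓ Q with hZdef
      have hZleQ : Z ≤ Q := inf_le_right
      haveI hZn : Z.Normal := by
        constructor
        intro z hz g
        obtain ⟨hz1, hz2⟩ := Subgroup.mem_inf.mp hz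
        refine Subgroup.mem_inf.mpr ⟨?_, hQn.conj_mem z hz2 g⟩
        rw [Subgroup.mem_centralizer_iff]
        intro h hh
        have h1 : g⁻¹ * h * g ∈ Q := by
          have := hQn.conj_mem h hh g⁻¹
          simpa using this
        have h2 : (g⁻¹ * h * g) * z = z * (g⁻¹ * h * g) :=
          Subgroup.mem_centralizer_iff.mp hz1 _ h1
        calc h * (g * z * g⁻¹) = g * ((g⁻¹ * h * g) * z) * g⁻¹ := by group
          _ = g * (z * (g⁻¹ * h * g)) * g⁻¹ := by rw [h2]
          _ = (g * z * g⁻¹) * h := by group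
      have hZinv : ∀ (e : E), ∀ z ∈ Z, e • z ∈ Z := by
        intro e z hz
        obtain ⟨hz1, hz2⟩ := Subgroup.mem_inf.mp hz
        refine Subgroup.mem_inf.mpr ⟨?_, hQinv e z hz2⟩
        rw [Subgroup.mem_centralizer_iff]
        intro h hh
        have h1 : e⁻¹ • h ∈ Q := hQinv e⁻¹ h hh
        have h2 : (e⁻¹ • h) * z = z * (e⁻¹ • h) :=
          Subgroup.mem_centralizer_iff.mp hz1 _ h1
        have := congrArg (fun w => e • w) h2
        simpa only [smul_mul', smul_inv_smul] using this
      have hZbot : Z ≠ ⊥ := by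
        haveI : Nontrivial Q := Q.nontrivial_iff_ne_bot.mpr hQb
        haveI : Nontrivial (Subgroup.center Q) :=
          (hP.to_subgroup Q).center_nontrivial
        obtain ⟨z, hz1⟩ := exists_ne (1 : Subgroup.center Q)
        intro hbot
        apply hz1
        have hmem : ((z : Q) : P) ∈ Z := by
          refine Subgroup.mem_inf.mpr ⟨?_, (z : Q).2⟩
          rw [Subgroup.mem_centralizer_iff]
          intro h hh
          have := (Subgroup.mem_center_iff.mp z.2 ⟨h, hh⟩)
          exact congrArg Subtype.val this
        rw [hbot, Subgroup.mem_bot] at hmem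
        exact Subtype.ext (Subtype.ext (by simpa using hmem))
      have hcomm : ∀ a ∈ Z, ∀ b ∈ Z, a * b = b * a := by
        intro a ha b hb
        exact (Subgroup.mem_centralizer_iff.mp (Subgroup.mem_inf.mp ha).1 b
          (Subgroup.mem_inf.mp hb).2).symm
      -- the quotient
      letI actQ : MulDistribMulAction E (P ⧸ Z) := glaubQuotAction Z hZinv
      have hsmk : ∀ (e : E) (p : P), e • ((p : P ⧸ Z)) = ((e • p : P) : P ⧸ Z) := by
        intro e p
        show QuotientGroup.map Z Z _ _ _ = _
        rw [QuotientGroup.map_mk, MulDistribMulAction.toMonoidHom_apply]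
      have hcard' : Nat.card (P ⧸ Z) < n := by
        have h1 : Nat.card P = Nat.card (P ⧸ Z) * Nat.card Z :=
          Subgroup.card_eq_card_quotient_mul_card_subgroup Z
        have h2 : 1 < Nat.card Z := (Subgroup.one_lt_card_iff_ne_bot Z).mpr hZbot
        have h3 : 0 < Nat.card (P ⧸ Z) := Nat.card_pos
        calc Nat.card (P ⧸ Z) < Nat.card (P ⧸ Z) * Nat.card Z :=
              (lt_mul_iff_one_lt_right h3).mpr h2
          _ = Nat.card P := h1.symm
          _ ≤ n := hcard
      set Q' : Subgroup (P ⧸ Z) := Q.map (QuotientGroup.mk' Z) with hQ'def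
      haveI : Q'.Normal := hQn.map (QuotientGroup.mk' Z) (QuotientGroup.mk'_surjective Z)
      have hQ'inv : ∀ (e : E), ∀ q ∈ Q', e • q ∈ Q' := by
        intro e q hq
        obtain ⟨q0, hq0, rfl⟩ := Subgroup.mem_map.mp hq
        rw [QuotientGroup.mk'_apply, hsmk]
        exact ⟨e • q0, hQinv e q0 hq0, rfl⟩
      have hx' : ∀ e : E, ((x : P ⧸ Z))⁻¹ * (e • (x : P ⧸ Z)) ∈ Q' := by
        intro e
        rw [hsmk]
        exact ⟨x⁻¹ * (e • x), hx e, by simp⟩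
      obtain ⟨ybar, hyfix, hyx⟩ := ih (Nat.card (P ⧸ Z)) hcard' (P ⧸ Z)
        (hP.to_quotient Z) le_rfl E hE Q' hQ'inv (x : P ⧸ Z) hx'
      obtain ⟨y, rfl⟩ := QuotientGroup.mk_surjective ybar
      have hyZ : ∀ e : E, y⁻¹ * (e • y) ∈ Z := by
        intro e
        have := hyfix e
        rw [hsmk] at this
        exact QuotientGroup.eq.mp this.symm
      have hyxQ : y⁻¹ * x ∈ Q := by
        have : ((y⁻¹ * x : P) : P ⧸ Z) ∈ Q' := by
          simpa using hyx
        obtain ⟨q0, hq0, hq0e⟩ := Subgroup.mem_map.mp this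
        have : q0⁻¹ * (y⁻¹ * x) ∈ Z := QuotientGroup.eq.mp hq0e
        have h4 : q0 * (q0⁻¹ * (y⁻¹ * x)) ∈ Q := Q.mul_mem hq0 (hZleQ this)
        simpa using h4
      obtain ⟨y', hfix', hy'y⟩ := glaub_abelian_coset hP hE Z hcomm hZinv y hyZ
      refine ⟨y', hfix', ?_⟩
      have : (y'⁻¹ * y) * (y⁻¹ * x) ∈ Q := Q.mul_mem (hZleQ hy'y) hyxQ
      simpa [mul_assoc] using this

/-- Glauberman's lemma instance: a group `E` of odd order acting on a finite 2-group `P`,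
stabilizing a normal subgroup `Q` with `[P,E] ≤ Q`, acts trivially on `P/Q`, every coset of
`Q` contains an `E`-fixed element, and `P = Q · C_P(E)`. -/
theorem stmt7 (P E : Type) [Group P] [Finite P] (hP : IsPGroup 2 P)
    [Group E] [Finite E] (hE : Odd (Nat.card E)) [MulDistribMulAction E P]
    (Q : Subgroup P) [Q.Normal]
    (hQinv : ∀ (e : E), ∀ q ∈ Q, e • q ∈ Q)
    (hPE : ∀ (e : E) (x : P), x⁻¹ * (e • x) ∈ Q) :
    (∀ (e : E) (x : P), (QuotientGroup.mk (e • x) : P ⧸ Q) = QuotientGroup.mk x)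
    ∧ (∀ x : P, ∃ y : P, (∀ e : E, e • y = y) ∧ y⁻¹ * x ∈ Q)
    ∧ (∀ x : P, ∃ q ∈ Q, ∃ r : P, (∀ e : E, e • r = r) ∧ x = q * r) := by
  have key : ∀ x : P, ∃ y : P, (∀ e : E, e • y = y) ∧ y⁻¹ * x ∈ Q := fun x =>
    glaub_key (Nat.card P) P hP le_rfl E hE Q hQinv x (fun e => hPE e x)
  refine ⟨fun e x => ?_, key, fun x => ?_⟩
  · apply QuotientGroup.eq.mpr
    have := Q.inv_mem (hPE e x)
    simpa [mul_inv_rev] using this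
  · obtain ⟨y, hfix, hyx⟩ := key x
    have hq : x * y⁻¹ ∈ Q := by
      have := ‹Q.Normal›.conj_mem _ hyx x
      have h2 : x * (y⁻¹ * x) * x⁻¹ = x * y⁻¹ := by group
      rwa [h2] at this
    exact ⟨x * y⁻¹, hq, y, hfix, by group⟩
end
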